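/- arXiv:2405.09388 — 2 statements merged into one kernel-verified Lean document; each statement's English description precedes it below -/
import Mathlib

section
/- Let G be a locally compact abelian group with Haar measure μ acting by *-automorphisms α on a unital C*-algebra 𝔘, and ω a state such that for some net of measurable sets U_i ⊆ G of finite positive measure, lim_i (1/μ(U_i)) ∫_{U_i} (ω(α_g(A)B) − ω(α_g A)ω(B)) dμ(g) = 0 for all A, B ∈ 𝔘. Then for every n ≥ 2 and all A_1,...,A_n ∈ 𝔘, lim_i (1/μ(U_i)) ∫_{U_i} c_n(α_g A_1, A_2, ..., A_n) dμ(g) = 0, and the same holds for the free cumulants κ_n. -/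
open scoped Classical
open Filter Topology

noncomputable section

/-- `π` is a set-partition of the finite set `S ⊆ ℕ`: a collection of nonempty subsets of `S`
such that every element of `S` lies in exactly one of them. -/
def IsSetPartition (S : Finset ℕ) (π : Finset (Finset ℕ)) : Prop :=
  (∀ V ∈ π, V ⊆ S) ∧ (∀ V ∈ π, V.Nonempty) ∧ ∀ a ∈ S, ∃! V, V ∈ π ∧ a ∈ V

/-- The finset of all set-partitions of `S`. -/
def setPartitions (S : Finset ℕ) : Finset (Finset (Finset ℕ)) :=
  S.powerset.powerset.filter (IsSetPartition S)

/-- A family of blocks is non-crossing if there are no `a < b < c < d` with `a, c` in one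
block and `b, d` in a different block. -/
def IsNonCrossing (π : Finset (Finset ℕ)) : Prop :=
  ¬ ∃ a b c d : ℕ, a < b ∧ b < c ∧ c < d ∧
      ∃ V ∈ π, ∃ W ∈ π, V ≠ W ∧ a ∈ V ∧ c ∈ V ∧ b ∈ W ∧ d ∈ W

/-- The finset of all non-crossing partitions of `S`. -/
def ncPartitions (S : Finset ℕ) : Finset (Finset (Finset ℕ)) :=
  (setPartitions S).filter IsNonCrossing

variable {𝔘 : Type*}

/-- The ordered list `A_{i_1}, …, A_{i_s}` of observables indexed by `V = {i_1 < ⋯ < i_s}`. -/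
def blockList (A : ℕ → 𝔘) (V : Finset ℕ) : List 𝔘 :=
  (V.sort (· ≤ ·)).map A

/-- The ordered product `A_{i_1} ⋯ A_{i_s}` over the block `V = {i_1 < ⋯ < i_s}`. -/
def blockProd [Monoid 𝔘] (A : ℕ → 𝔘) (V : Finset ℕ) : 𝔘 :=
  (blockList A V).prod

/-- The joint classical cumulant of `ω` of the observables `A_i`, `i ∈ S` (order preserved):
`c(S) = ∑_{π ∈ P(S)} (-1)^{|π|-1}(|π|-1)! ∏_{V ∈ π} ω(∏_{i ∈ V} A_i)`. -/
def cumulant [Monoid 𝔘] (ω : 𝔘 → ℂ) (A : ℕ → 𝔘) (S : Finset ℕ) : ℂ :=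
  ∑ π ∈ setPartitions S,
    (-1 : ℂ) ^ (π.card - 1) * ((π.card - 1).factorial : ℂ) * ∏ V ∈ π, ω (blockProd A V)

/-- `κ` (as a function of the ordered list of observables) is the family of free cumulants of
`ω`: it satisfies the moments-to-free-cumulants formula over non-crossing partitions. -/
def IsFreeCumulantFamily [Monoid 𝔘] (ω : 𝔘 → ℂ) (κ : List 𝔘 → ℂ) : Prop :=
  ∀ (A : ℕ → 𝔘) (S : Finset ℕ), S.Nonempty →
    ω (blockProd A S) = ∑ π ∈ ncPartitions S, ∏ V ∈ π, κ (blockList A V)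

/-- A state on a unital C*-algebra: a positive unital linear functional. -/
structure IsState [NormedRing 𝔘] [StarRing 𝔘] [NormedAlgebra ℂ 𝔘] (ω : 𝔘 →ₗ[ℂ] ℂ) : Prop where
  unital : ω 1 = 1
  positive : ∀ a : 𝔘, 0 ≤ (ω (star a * a)).re ∧ (ω (star a * a)).im = 0

/-- `α` is a representation of the group `G` by *-automorphisms. -/
def IsStarAutoRep {G : Type*} [Monoid G] [Ring 𝔘] [Algebra ℂ 𝔘] [StarRing 𝔘]
    (α : G → 𝔘 ≃⋆ₐ[ℂ] 𝔘) : Prop :=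
  ∀ (g h : G) (x : 𝔘), α (g * h) x = α g (α h x)

/-! ### basic partition lemmas -/

lemma mem_setPartitions {S : Finset ℕ} {π : Finset (Finset ℕ)} :
    π ∈ setPartitions S ↔ IsSetPartition S π := by
  simp only [setPartitions, Finset.mem_filter, Finset.mem_powerset, and_iff_right_iff_imp]
  intro h
  intro V hV
  rw [Finset.mem_powerset]
  exact h.1 V hV

lemma IsSetPartition.block_eq {S π} (h : IsSetPartition S π) {V W : Finset ℕ} {a : ℕ}
    (hV : V ∈ π) (hW : W ∈ π) (haV : a ∈ V) (haW : a ∈ W) : V = W := by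
  obtain ⟨U, _, hU⟩ := h.2.2 a (h.1 V hV haV)
  rw [hU V ⟨hV, haV⟩, hU W ⟨hW, haW⟩]

def blk (π : Finset (Finset ℕ)) : Finset ℕ := (π.filter fun V => 1 ∈ V).sup id

lemma blk_eq {S π} (h : IsSetPartition S π) {V : Finset ℕ} (hV : V ∈ π) (h1 : 1 ∈ V) :
    blk π = V := by
  have : π.filter (fun V => 1 ∈ V) = {V} := by
    ext W
    simp only [Finset.mem_filter, Finset.mem_singleton]
    constructor
    · rintro ⟨hW, h1W⟩; exact h.block_eq hW hV h1W h1
    · rintro rfl; exact ⟨hV, h1⟩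
  rw [blk, this, Finset.sup_singleton, id]

lemma IsSetPartition.eq_singleton {S π} (h : IsSetPartition S π) (hS : S ∈ π) : π = {S} := by
  apply Finset.eq_singleton_iff_unique_mem.2
  refine ⟨hS, fun W hW => ?_⟩
  obtain ⟨a, ha⟩ := h.2.1 W hW
  exact h.block_eq hW hS ha (h.1 W hW ha)

lemma setPartitions_singleton (a : ℕ) : setPartitions {a} = {{{a}}} := by
  ext π
  rw [mem_setPartitions, Finset.mem_singleton]
  constructor
  · intro h
    have ha : ∃ V ∈ π, a ∈ V := by
      obtain ⟨V, ⟨hV, haV⟩, _⟩ := h.2.2 a (Finset.mem_singleton_self a)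
      exact ⟨V, hV, haV⟩
    obtain ⟨V, hV, haV⟩ := ha
    have hVa : V = {a} := by
      apply Finset.Subset.antisymm (h.1 V hV)
      simp [haV]
    subst hVa
    exact h.eq_singleton hV
  · rintro rfl
    refine ⟨by simp, by simp, fun b hb => ?_⟩
    simp only [Finset.mem_singleton] at hb
    refine ⟨({a} : Finset ℕ), ⟨by simp, by simp [hb]⟩, ?_⟩
    rintro W ⟨hW, -⟩
    simpa using hW

/-! ### sort lemmas -/

lemma sort_Icc (a b : ℕ) : (Finset.Icc a b).sort (· ≤ ·) = List.range' a (b + 1 - a) := by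
  by_cases hab : a ≤ b
  · have key : ∀ k a, a + k = b + 1 → (Finset.Icc a b).sort (· ≤ ·) = List.range' a k := by
      intro k
      induction k with
      | zero =>
        intro a ha
        have : Finset.Icc a b = ∅ := Finset.Icc_eq_empty (by omega)
        rw [this]
        simp
      | succ n ih =>
        intro a ha
        have hab' : a ≤ b := by omega
        have : Finset.Icc a b = insert a (Finset.Icc (a + 1) b) := by
          rw [Finset.insert_Icc_add_one_left_eq_Icc hab']
        rw [this, Finset.sort_insert]
        · rw [ih (a+1) (by omega)]
          rfl
        · intro c hc; simp at hc; omega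
        · simp
    exact key _ a (by omega)
  · have h1 : Finset.Icc a b = ∅ := by rw [Finset.Icc_eq_empty]; omega
    have h2 : b + 1 - a = 0 := by omega
    rw [h1, h2]
    simp

lemma sort_cons_min {V : Finset ℕ} (h1 : 1 ∈ V) (h0 : 0 ∉ V) :
    V.sort (· ≤ ·) = 1 :: (V.erase 1).sort (· ≤ ·) := by
  nth_rewrite 1 [← Finset.insert_erase h1]
  rw [Finset.sort_insert]
  · intro c hc
    simp only [Finset.mem_erase] at hc
    rcases hc with ⟨hne, hcV⟩
    have : c ≠ 0 := fun h => h0 (h ▸ hcV)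
    omega
  · simp

/-! ### blockList lemmas -/

lemma blockList_update_of_not_mem (A : ℕ → 𝔘) (v : 𝔘) {V : Finset ℕ} (h : 1 ∉ V) :
    blockList (Function.update A 1 v) V = blockList A V := by
  unfold blockList
  apply List.map_congr_left
  intro a ha
  have haV : a ∈ V := (Finset.mem_sort _).1 ha
  exact Function.update_of_ne (fun h' => h (by rwa [← h'])) _ _

lemma blockList_update_of_mem (A : ℕ → 𝔘) (v : 𝔘) {V : Finset ℕ} (h1 : 1 ∈ V) (h0 : 0 ∉ V) :
    blockList (Function.update A 1 v) V = v :: blockList A (V.erase 1) := by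
  unfold blockList
  rw [sort_cons_min h1 h0]
  simp only [List.map_cons, Function.update_self]
  congr 1
  apply List.map_congr_left
  intro a ha
  have haV : a ∈ V.erase 1 := (Finset.mem_sort _).1 ha
  exact Function.update_of_ne (Finset.ne_of_mem_erase haV) _ _

lemma blockProd_update_of_mem [Monoid 𝔘] (A : ℕ → 𝔘) (v : 𝔘) {V : Finset ℕ}
    (h1 : 1 ∈ V) (h0 : 0 ∉ V) :
    blockProd (Function.update A 1 v) V = v * blockProd A (V.erase 1) := by
  rw [blockProd, blockList_update_of_mem A v h1 h0, List.prod_cons, blockProd]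

lemma blockProd_update_of_not_mem [Monoid 𝔘] (A : ℕ → 𝔘) (v : 𝔘) {V : Finset ℕ} (h : 1 ∉ V) :
    blockProd (Function.update A 1 v) V = blockProd A V := by
  rw [blockProd, blockList_update_of_not_mem A v h, blockProd]

lemma blockProd_empty [Monoid 𝔘] (A : ℕ → 𝔘) : blockProd A ∅ = 1 := by
  simp [blockProd, blockList]

/-! ### the insertion and deletion maps on partitions -/

def insBlk (π' : Finset (Finset ℕ)) (v : Finset ℕ) : Finset (Finset ℕ) :=
  if v = ∅ then insert {1} π' else insert (insert 1 v) (π'.erase v)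

def delBlk (π : Finset (Finset ℕ)) : Finset (Finset ℕ) :=
  if blk π = {1} then π.erase {1} else insert ((blk π).erase 1) (π.erase (blk π))

lemma blk_spec {S π} (h : IsSetPartition S π) (h1 : 1 ∈ S) : blk π ∈ π ∧ 1 ∈ blk π := by
  obtain ⟨V, ⟨hV, h1V⟩, -⟩ := h.2.2 1 h1
  rw [blk_eq h hV h1V]
  exact ⟨hV, h1V⟩

lemma not_one_mem_block {S : Finset ℕ} {π : Finset (Finset ℕ)} (h : IsSetPartition (S.erase 1) π) {V : Finset ℕ} (hV : V ∈ π) :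
    1 ∉ V := fun h1 => (Finset.mem_erase.1 (h.1 V hV h1)).1 rfl

lemma insBlk_isPartition {S : Finset ℕ} (h1S : 1 ∈ S) {π' : Finset (Finset ℕ)}
    (h : IsSetPartition (S.erase 1) π') {v : Finset ℕ} (hv : v ∈ insert ∅ π') :
    IsSetPartition S (insBlk π' v) := by
  rcases Finset.mem_insert.1 hv with rfl | hv
  · rw [insBlk, if_pos rfl]
    refine ⟨?_, ?_, ?_⟩
    · intro V hV
      rcases Finset.mem_insert.1 hV with rfl | hV
      · simpa using h1S
      · exact (h.1 V hV).trans (Finset.erase_subset _ _)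
    · intro V hV
      rcases Finset.mem_insert.1 hV with rfl | hV
      · exact ⟨1, Finset.mem_singleton_self 1⟩
      · exact h.2.1 V hV
    · intro a haS
      by_cases ha1 : a = 1
      · subst ha1
        refine ⟨{1}, ⟨Finset.mem_insert_self _ _, Finset.mem_singleton_self 1⟩, ?_⟩
        rintro W ⟨hW, h1W⟩
        rcases Finset.mem_insert.1 hW with rfl | hW
        · rfl
        · exact absurd h1W (not_one_mem_block h hW)
      · obtain ⟨V, ⟨hV, haV⟩, hVu⟩ := h.2.2 a (Finset.mem_erase.2 ⟨ha1, haS⟩)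
        refine ⟨V, ⟨Finset.mem_insert_of_mem hV, haV⟩, ?_⟩
        rintro W ⟨hW, haW⟩
        rcases Finset.mem_insert.1 hW with rfl | hW
        · exact absurd (Finset.mem_singleton.1 haW) ha1
        · exact hVu W ⟨hW, haW⟩
  · have hvne : v ≠ ∅ := Finset.nonempty_iff_ne_empty.1 (h.2.1 v hv)
    rw [insBlk, if_neg hvne]
    have h1v : 1 ∉ v := not_one_mem_block h hv
    refine ⟨?_, ?_, ?_⟩
    · intro V hV
      rcases Finset.mem_insert.1 hV with rfl | hV
      · exact Finset.insert_subset h1S ((h.1 v hv).trans (Finset.erase_subset _ _))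
      · exact (h.1 V (Finset.mem_of_mem_erase hV)).trans (Finset.erase_subset _ _)
    · intro V hV
      rcases Finset.mem_insert.1 hV with rfl | hV
      · exact Finset.insert_nonempty _ _
      · exact h.2.1 V (Finset.mem_of_mem_erase hV)
    · intro a haS
      by_cases ha1 : a = 1
      · subst ha1
        refine ⟨insert 1 v, ⟨Finset.mem_insert_self _ _, Finset.mem_insert_self _ _⟩, ?_⟩
        rintro W ⟨hW, h1W⟩
        rcases Finset.mem_insert.1 hW with rfl | hW
        · rfl
        · exact absurd h1W (not_one_mem_block h (Finset.mem_of_mem_erase hW))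
      · obtain ⟨V, ⟨hV, haV⟩, hVu⟩ := h.2.2 a (Finset.mem_erase.2 ⟨ha1, haS⟩)
        by_cases hVv : V = v
        · subst hVv
          refine ⟨insert 1 V, ⟨Finset.mem_insert_self _ _, Finset.mem_insert_of_mem haV⟩, ?_⟩
          rintro W ⟨hW, haW⟩
          rcases Finset.mem_insert.1 hW with rfl | hW
          · rfl
          · exact absurd (hVu W ⟨Finset.mem_of_mem_erase hW, haW⟩)
              (Finset.ne_of_mem_erase hW)
        · refine ⟨V, ⟨Finset.mem_insert_of_mem (Finset.mem_erase.2 ⟨hVv, hV⟩), haV⟩, ?_⟩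
          rintro W ⟨hW, haW⟩
          rcases Finset.mem_insert.1 hW with rfl | hW
          · rcases Finset.mem_insert.1 haW with rfl | haW
            · exact absurd rfl ha1
            · exact absurd (hVu v ⟨hv, haW⟩).symm hVv
          · exact hVu W ⟨Finset.mem_of_mem_erase hW, haW⟩

lemma blkerase_not_mem {S π} (h : IsSetPartition S π) (h1S : 1 ∈ S) :
    (blk π).erase 1 ∉ π := by
  intro hmem
  obtain ⟨hBmem, h1B⟩ := blk_spec h h1S
  obtain ⟨a, ha⟩ := h.2.1 _ hmem
  have heq := h.block_eq hmem hBmem ha (Finset.mem_of_mem_erase ha)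
  exact Finset.notMem_erase 1 (blk π) (by rw [heq]; exact h1B)

lemma delBlk_isPartition {S π} (h : IsSetPartition S π) (h1S : 1 ∈ S) :
    IsSetPartition (S.erase 1) (delBlk π) := by
  obtain ⟨hBmem, h1B⟩ := blk_spec h h1S
  have block_no1 : ∀ V ∈ π, V ≠ blk π → 1 ∉ V := fun V hV hne h1V =>
    hne (h.block_eq hV hBmem h1V h1B)
  by_cases hB : blk π = {1}
  · rw [delBlk, if_pos hB]
    refine ⟨?_, ?_, ?_⟩
    · intro V hV
      obtain ⟨hne, hV⟩ := Finset.mem_erase.1 hV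
      refine Finset.subset_erase.2 ⟨h.1 V hV, block_no1 V hV (fun h' => hne (h'.trans hB))⟩
    · intro V hV
      exact h.2.1 V (Finset.mem_of_mem_erase hV)
    · intro a haS'
      obtain ⟨ha1, haS⟩ := Finset.mem_erase.1 haS'
      obtain ⟨V, ⟨hV, haV⟩, hVu⟩ := h.2.2 a haS
      have hVne : V ≠ {1} := fun h' => ha1 (Finset.mem_singleton.1 (h' ▸ haV))
      refine ⟨V, ⟨Finset.mem_erase.2 ⟨hVne, hV⟩, haV⟩, ?_⟩
      rintro W ⟨hW, haW⟩
      exact hVu W ⟨Finset.mem_of_mem_erase hW, haW⟩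
  · rw [delBlk, if_neg hB]
    refine ⟨?_, ?_, ?_⟩
    · intro V hV
      rcases Finset.mem_insert.1 hV with rfl | hV
      · exact Finset.erase_subset_erase 1 (h.1 _ hBmem)
      · obtain ⟨hne, hV⟩ := Finset.mem_erase.1 hV
        exact Finset.subset_erase.2 ⟨h.1 V hV, block_no1 V hV hne⟩
    · intro V hV
      rcases Finset.mem_insert.1 hV with rfl | hV
      · rcases Finset.eq_empty_or_nonempty ((blk π).erase 1) with he | hne
        · exact absurd ((Finset.erase_eq_empty_iff _ _).1 he)
            (by rintro (h' | h') <;>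
              [exact Finset.nonempty_iff_ne_empty.1 (h.2.1 _ hBmem) h'; exact hB h'])
        · exact hne
      · exact h.2.1 V (Finset.mem_of_mem_erase hV)
    · intro a haS'
      obtain ⟨ha1, haS⟩ := Finset.mem_erase.1 haS'
      obtain ⟨V, ⟨hV, haV⟩, hVu⟩ := h.2.2 a haS
      by_cases hVB : V = blk π
      · refine ⟨(blk π).erase 1, ⟨Finset.mem_insert_self _ _,
          Finset.mem_erase.2 ⟨ha1, hVB ▸ haV⟩⟩, ?_⟩
        rintro W ⟨hW, haW⟩
        rcases Finset.mem_insert.1 hW with rfl | hW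
        · rfl
        · exact absurd ((hVu W ⟨Finset.mem_of_mem_erase hW, haW⟩).trans hVB)
            (Finset.ne_of_mem_erase hW)
      · refine ⟨V, ⟨Finset.mem_insert_of_mem (Finset.mem_erase.2 ⟨hVB, hV⟩), haV⟩, ?_⟩
        rintro W ⟨hW, haW⟩
        rcases Finset.mem_insert.1 hW with rfl | hW
        · exact absurd (hVu _ ⟨hBmem, Finset.mem_of_mem_erase haW⟩).symm hVB
        · exact hVu W ⟨Finset.mem_of_mem_erase hW, haW⟩

lemma blkerase_mem_delBlk {S π} (h : IsSetPartition S π) (h1S : 1 ∈ S) :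
    (blk π).erase 1 ∈ insert ∅ (delBlk π) := by
  by_cases hB : blk π = {1}
  · rw [hB]
    simp
  · rw [delBlk, if_neg hB]
    exact Finset.mem_insert_of_mem (Finset.mem_insert_self _ _)

lemma insBlk_delBlk {S π} (h : IsSetPartition S π) (h1S : 1 ∈ S) :
    insBlk (delBlk π) ((blk π).erase 1) = π := by
  obtain ⟨hBmem, h1B⟩ := blk_spec h h1S
  by_cases hB : blk π = {1}
  · rw [delBlk, if_pos hB, hB, insBlk]
    rw [if_pos (Finset.erase_singleton 1)]
    rw [← hB, Finset.insert_erase hBmem]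
  · have hne : (blk π).erase 1 ≠ ∅ := by
      intro he
      rcases (Finset.erase_eq_empty_iff _ _).1 he with h' | h'
      · exact Finset.nonempty_iff_ne_empty.1 (h.2.1 _ hBmem) h'
      · exact hB h'
    have e1 : insert 1 ((blk π).erase 1) = blk π := Finset.insert_erase h1B
    have e2 : (insert ((blk π).erase 1) (π.erase (blk π))).erase ((blk π).erase 1)
        = π.erase (blk π) := Finset.erase_insert
      (fun hmem => blkerase_not_mem h h1S (Finset.mem_of_mem_erase hmem))
    rw [delBlk, if_neg hB, insBlk, if_neg hne, e2, e1, Finset.insert_erase hBmem]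

lemma delBlk_insBlk {S : Finset ℕ} (h1S : 1 ∈ S) {π' : Finset (Finset ℕ)}
    (h : IsSetPartition (S.erase 1) π') {v : Finset ℕ} (hv : v ∈ insert ∅ π') :
    delBlk (insBlk π' v) = π' ∧ (blk (insBlk π' v)).erase 1 = v := by
  have hpart := insBlk_isPartition h1S h hv
  rcases Finset.mem_insert.1 hv with rfl | hv
  · rw [insBlk, if_pos rfl] at hpart ⊢
    have hblk : blk (insert {1} π') = {1} :=
      blk_eq hpart (Finset.mem_insert_self _ _) (Finset.mem_singleton_self 1)
    rw [delBlk, if_pos hblk, hblk]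
    constructor
    · rw [Finset.erase_insert]
      intro hmem
      exact (Finset.mem_erase.1 (h.1 _ hmem (Finset.mem_singleton_self 1))).1 rfl
    · exact Finset.erase_singleton 1
  · have hvne : v ≠ ∅ := Finset.nonempty_iff_ne_empty.1 (h.2.1 v hv)
    have h1v : 1 ∉ v := not_one_mem_block h hv
    rw [insBlk, if_neg hvne] at hpart ⊢
    have hblk : blk (insert (insert 1 v) (π'.erase v)) = insert 1 v :=
      blk_eq hpart (Finset.mem_insert_self _ _) (Finset.mem_insert_self _ _)
    have hBne : insert 1 v ≠ {1} := by
      intro h'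
      obtain ⟨a, ha⟩ := Finset.nonempty_iff_ne_empty.2 hvne
      have : a ∈ ({1} : Finset ℕ) := h' ▸ Finset.mem_insert_of_mem ha
      exact h1v ((Finset.mem_singleton.1 this) ▸ ha)
    have herase : (insert 1 v).erase 1 = v := Finset.erase_insert h1v
    have hnotmem : insert 1 v ∉ π'.erase v := fun hmem =>
      not_one_mem_block h (Finset.mem_of_mem_erase hmem) (Finset.mem_insert_self 1 v)
    have e2 : (insert (insert 1 v) (π'.erase v)).erase (insert 1 v) = π'.erase v :=
      Finset.erase_insert hnotmem
    simp only [delBlk, hblk]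
    rw [if_neg hBne, herase, e2]
    exact ⟨Finset.insert_erase hv, rfl⟩

/-! ### the vanishing of the "independent" cumulant sum -/

lemma Kzero (S : Finset ℕ) (h1S : 1 ∈ S) (h2 : 2 ≤ S.card)
    (f : Finset ℕ → ℂ) (hf : f ∅ = 1) :
    ∑ π ∈ setPartitions S,
      (-1 : ℂ) ^ (π.card - 1) * ((π.card - 1).factorial : ℂ) * ∏ V ∈ π, f (V.erase 1) = 0 := by
  classical
  have key := Finset.sum_bij'
    (s := setPartitions S)
    (t := (setPartitions (S.erase 1)).sigma fun π' => insert ∅ π')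
    (f := fun π => (-1 : ℂ) ^ (π.card - 1) * ((π.card - 1).factorial : ℂ) *
        ∏ V ∈ π, f (V.erase 1))
    (g := fun p => (-1 : ℂ) ^ ((insBlk p.1 p.2).card - 1) *
        (((insBlk p.1 p.2).card - 1).factorial : ℂ) * ∏ V ∈ insBlk p.1 p.2, f (V.erase 1))
    (i := fun π _ => ⟨delBlk π, (blk π).erase 1⟩)
    (j := fun p _ => insBlk p.1 p.2)
    ?_ ?_ ?_ ?_ ?_
  rotate_left
  · intro π hπ
    have h := mem_setPartitions.1 hπ
    exact Finset.mem_sigma.2 ⟨mem_setPartitions.2 (delBlk_isPartition h h1S),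
      blkerase_mem_delBlk h h1S⟩
  · intro p hp
    obtain ⟨hp1, hp2⟩ := Finset.mem_sigma.1 hp
    exact mem_setPartitions.2 (insBlk_isPartition h1S (mem_setPartitions.1 hp1) hp2)
  · intro π hπ
    exact insBlk_delBlk (mem_setPartitions.1 hπ) h1S
  · intro p hp
    obtain ⟨hp1, hp2⟩ := Finset.mem_sigma.1 hp
    obtain ⟨hd, hb⟩ := delBlk_insBlk h1S (mem_setPartitions.1 hp1) hp2
    exact Sigma.ext hd (heq_of_eq hb)
  · intro π hπ
    dsimp only
    rw [insBlk_delBlk (mem_setPartitions.1 hπ) h1S]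
  · -- now compute the right hand side
    rw [key, Finset.sum_sigma]
    apply Finset.sum_eq_zero
    intro π' hπ'
    dsimp only
    have h := mem_setPartitions.1 hπ'
    have hS'ne : (S.erase 1).Nonempty := by
      obtain ⟨a, haS, hane⟩ := Finset.exists_mem_ne (s := S) (by omega) 1
      exact ⟨a, Finset.mem_erase.2 ⟨hane, haS⟩⟩
    have hπ'ne : π'.Nonempty := by
      obtain ⟨a, ha⟩ := hS'ne
      obtain ⟨V, ⟨hV, -⟩, -⟩ := h.2.2 a ha
      exact ⟨V, hV⟩
    obtain ⟨k, hk⟩ : ∃ k, π'.card = k + 1 :=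
      ⟨π'.card - 1, by have := Finset.card_pos.2 hπ'ne; omega⟩
    have hempty : (∅ : Finset ℕ) ∉ π' := fun hmem =>
      Finset.nonempty_iff_ne_empty.1 (h.2.1 ∅ hmem) rfl
    have h1blk : ∀ V ∈ π', 1 ∉ V := fun V hV => not_one_mem_block h hV
    have hone : ({1} : Finset ℕ) ∉ π' := fun hmem => h1blk _ hmem (Finset.mem_singleton_self 1)
    rw [Finset.sum_insert hempty]
    -- the empty-v term
    have hterm0 : insBlk π' ∅ = insert {1} π' := by rw [insBlk, if_pos rfl]
    have hcard0 : (insBlk π' ∅).card = π'.card + 1 := by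
      rw [hterm0, Finset.card_insert_of_notMem hone]
    have hprod0 : ∏ V ∈ insBlk π' ∅, f (V.erase 1) = ∏ V ∈ π', f V := by
      rw [hterm0, Finset.prod_insert hone, Finset.erase_singleton, hf, one_mul]
      exact Finset.prod_congr rfl fun V hV => by
        rw [Finset.erase_eq_of_notMem (h1blk V hV)]
    -- the other terms
    have hterm : ∀ v ∈ π', insBlk π' v = insert (insert 1 v) (π'.erase v) := by
      intro v hv
      rw [insBlk, if_neg (Finset.nonempty_iff_ne_empty.1 (h.2.1 v hv))]
    have hnotmem : ∀ v ∈ π', insert 1 v ∉ π'.erase v := fun v hv hmem =>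
      h1blk _ (Finset.mem_of_mem_erase hmem) (Finset.mem_insert_self 1 v)
    have hcard : ∀ v ∈ π', (insBlk π' v).card = π'.card := by
      intro v hv
      rw [hterm v hv, Finset.card_insert_of_notMem (hnotmem v hv),
        Finset.card_erase_of_mem hv]
      omega
    have hprod : ∀ v ∈ π', ∏ V ∈ insBlk π' v, f (V.erase 1) = ∏ V ∈ π', f V := by
      intro v hv
      rw [hterm v hv, Finset.prod_insert (hnotmem v hv),
        Finset.erase_insert (h1blk v hv)]
      rw [show ∏ V ∈ π'.erase v, f (V.erase 1) = ∏ V ∈ π'.erase v, f V from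
        Finset.prod_congr rfl fun V hV => by
          rw [Finset.erase_eq_of_notMem (h1blk V (Finset.mem_of_mem_erase hV))]]
      exact Finset.mul_prod_erase π' f hv
    rw [hcard0, hprod0]
    rw [Finset.sum_congr rfl (fun v hv => by rw [hcard v hv, hprod v hv])]
    rw [Finset.sum_const, hk]
    simp only [Nat.add_sub_cancel]
    rw [Nat.factorial_succ]
    push_cast
    ring

/-! ### non-crossing partition lemmas -/

lemma mem_ncPartitions {S : Finset ℕ} {π : Finset (Finset ℕ)} :
    π ∈ ncPartitions S ↔ IsSetPartition S π ∧ IsNonCrossing π := by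
  rw [ncPartitions, Finset.mem_filter, mem_setPartitions]

lemma isNonCrossing_of_subset {π π' : Finset (Finset ℕ)} (hsub : π ⊆ π')
    (h : IsNonCrossing π') : IsNonCrossing π := by
  rintro ⟨a, b, c, d, hab, hbc, hcd, V, hV, W, hW, hr⟩
  exact h ⟨a, b, c, d, hab, hbc, hcd, V, hsub hV, W, hsub hW, hr⟩

lemma isNonCrossing_insert_singleton {π : Finset (Finset ℕ)} (e : ℕ)
    (h : IsNonCrossing π) : IsNonCrossing (insert {e} π) := by
  rintro ⟨a, b, c, d, hab, hbc, hcd, V, hV, W, hW, hVW, haV, hcV, hbW, hdW⟩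
  rcases Finset.mem_insert.1 hV with rfl | hV
  · rw [Finset.mem_singleton] at haV hcV
    omega
  · rcases Finset.mem_insert.1 hW with rfl | hW
    · rw [Finset.mem_singleton] at hbW hdW
      omega
    · exact h ⟨a, b, c, d, hab, hbc, hcd, V, hV, W, hW, hVW, haV, hcV, hbW, hdW⟩

lemma isSetPartition_full {S : Finset ℕ} (hS : S.Nonempty) : IsSetPartition S {S} := by
  refine ⟨by simp, by simpa using hS, fun a ha => ⟨S, by simpa using ha, ?_⟩⟩
  rintro W ⟨hW, -⟩
  simpa using hW

lemma full_mem_ncPartitions {S : Finset ℕ} (hS : S.Nonempty) : {S} ∈ ncPartitions S := by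
  refine mem_ncPartitions.2 ⟨isSetPartition_full hS, ?_⟩
  rintro ⟨a, b, c, d, -, -, -, V, hV, W, hW, hVW, -⟩
  rw [Finset.mem_singleton] at hV hW
  exact hVW (hV.trans hW.symm)

lemma ncPartitions_singleton (a : ℕ) : ncPartitions {a} = {{{a}}} := by
  rw [ncPartitions, setPartitions_singleton]
  rw [Finset.filter_singleton, if_pos]
  rintro ⟨x, y, z, w, -, -, -, V, hV, W, hW, hVW, -⟩
  rw [Finset.mem_singleton] at hV hW
  exact hVW (hV.trans hW.symm)

lemma eq_full_of_mem {S : Finset ℕ} {π : Finset (Finset ℕ)} (h : IsSetPartition S π)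
    (hS : S ∈ π) : π = {S} := h.eq_singleton hS

/-! ### free cumulant basics -/

lemma kappa_singleton [Monoid 𝔘] {ω : 𝔘 → ℂ} {κ : List 𝔘 → ℂ}
    (hκ : IsFreeCumulantFamily ω κ) (u : 𝔘) : κ [u] = ω u := by
  have := hκ (fun _ => u) {1} ⟨1, Finset.mem_singleton_self 1⟩
  rw [ncPartitions_singleton] at this
  have hb : blockList (fun _ => u) ({1} : Finset ℕ) = [u] := by
    rw [blockList, Finset.sort_singleton]
    rfl
  have hp : blockProd (fun _ => u) ({1} : Finset ℕ) = u := by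
    rw [blockProd, hb, List.prod_singleton]
  rw [hp, Finset.sum_singleton, Finset.prod_singleton, hb] at this
  exact this.symm

/-- the set of "bad" partitions in the recursion -/
def badset (S : Finset ℕ) : Finset (Finset (Finset ℕ)) :=
  (ncPartitions S).filter (fun π => π ≠ {S} ∧ ({1} : Finset ℕ) ∉ π)

lemma blk_card_lt {S : Finset ℕ} {π : Finset (Finset ℕ)} (h : IsSetPartition S π)
    (h1S : 1 ∈ S) (hπ : π ≠ {S}) : (blk π).card < S.card := by
  obtain ⟨hBmem, -⟩ := blk_spec h h1S
  have hsub : blk π ⊆ S := h.1 _ hBmem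
  by_cases heq : blk π = S
  · exact absurd (h.eq_singleton (heq ▸ hBmem)) hπ
  · exact Finset.card_lt_card (Finset.ssubset_iff_subset_ne.2 ⟨hsub, heq⟩)

lemma blk_erase_nonempty {S : Finset ℕ} {π : Finset (Finset ℕ)} (h : IsSetPartition S π)
    (h1S : 1 ∈ S) (hone : ({1} : Finset ℕ) ∉ π) : ((blk π).erase 1).Nonempty := by
  obtain ⟨hBmem, h1B⟩ := blk_spec h h1S
  rw [Finset.nonempty_iff_ne_empty]
  intro he
  rcases (Finset.erase_eq_empty_iff ..).1 he with h' | h'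
  · exact Finset.nonempty_iff_ne_empty.1 (h.2.1 _ hBmem) h'
  · exact hone (h' ▸ hBmem)

/-- The key recursion for free cumulants. -/
lemma free_decomp [Monoid 𝔘] {ω : 𝔘 → ℂ} {κ : List 𝔘 → ℂ}
    (hκ : IsFreeCumulantFamily ω κ) (A : ℕ → 𝔘) (u : 𝔘) (S : Finset ℕ)
    (h1S : 1 ∈ S) (h0S : 0 ∉ S) (h2 : 2 ≤ S.card) :
    κ (u :: blockList A (S.erase 1)) =
      (ω (u * blockProd A (S.erase 1)) - ω u * ω (blockProd A (S.erase 1)))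
      - ∑ π ∈ badset S,
          κ (u :: blockList A ((blk π).erase 1)) * ∏ V ∈ π.erase (blk π), κ (blockList A V) := by
  classical
  have hSne : S.Nonempty := ⟨1, h1S⟩
  set A' := Function.update A 1 u with hA'
  have hmom := hκ A' S hSne
  have hBL : blockList A' S = u :: blockList A (S.erase 1) :=
    blockList_update_of_mem A u h1S h0S
  have hBP : blockProd A' S = u * blockProd A (S.erase 1) :=
    blockProd_update_of_mem A u h1S h0S
  have hfull : {S} ∈ ncPartitions S := full_mem_ncPartitions hSne
  rw [← Finset.add_sum_erase _ _ hfull] at hmom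
  rw [Finset.prod_singleton, hBL] at hmom
  -- split the remaining sum
  rw [← Finset.sum_filter_add_sum_filter_not ((ncPartitions S).erase {S})
    (fun π => ({1} : Finset ℕ) ∈ π)] at hmom
  have hSne1 : S ≠ {1} := by
    intro h'
    rw [h'] at h2
    simp at h2
  -- first filtered sum equals ω u * ω (blockProd A (S.erase 1))
  have e1 : ((ncPartitions S).erase {S}).filter (fun π => ({1} : Finset ℕ) ∈ π)
      = (ncPartitions S).filter (fun π => ({1} : Finset ℕ) ∈ π) := by
    ext π
    simp only [Finset.mem_filter, Finset.mem_erase]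
    constructor
    · rintro ⟨⟨-, h⟩, h'⟩; exact ⟨h, h'⟩
    · rintro ⟨h, h'⟩
      refine ⟨⟨?_, h⟩, h'⟩
      rintro rfl
      rw [Finset.mem_singleton] at h'
      exact hSne1 h'.symm
  rw [e1] at hmom
  have e2 : ∑ π ∈ (ncPartitions S).filter (fun π => ({1} : Finset ℕ) ∈ π),
        ∏ V ∈ π, κ (blockList A' V)
      = ω u * ω (blockProd A (S.erase 1)) := by
    have hbij := Finset.sum_bij'
      (s := (ncPartitions S).filter (fun π => ({1} : Finset ℕ) ∈ π))
      (t := ncPartitions (S.erase 1))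
      (f := fun π => ∏ V ∈ π, κ (blockList A' V))
      (g := fun π' => ∏ V ∈ insert ({1} : Finset ℕ) π', κ (blockList A' V))
      (i := fun π _ => π.erase {1})
      (j := fun π' _ => insert {1} π')
      ?_ ?_ ?_ ?_ ?_
    rotate_left
    · intro π hπ
      obtain ⟨hπ, h1π⟩ := Finset.mem_filter.1 hπ
      obtain ⟨hpart, hnc⟩ := mem_ncPartitions.1 hπ
      have hblk : blk π = {1} := blk_eq hpart h1π (Finset.mem_singleton_self 1)
      have := delBlk_isPartition hpart h1S
      rw [delBlk, if_pos hblk] at this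
      exact mem_ncPartitions.2 ⟨this, isNonCrossing_of_subset (Finset.erase_subset _ _) hnc⟩
    · intro π' hπ'
      obtain ⟨hpart, hnc⟩ := mem_ncPartitions.1 hπ'
      have hins := insBlk_isPartition h1S hpart (Finset.mem_insert_self ∅ π')
      rw [insBlk, if_pos rfl] at hins
      exact Finset.mem_filter.2 ⟨mem_ncPartitions.2
        ⟨hins, isNonCrossing_insert_singleton 1 hnc⟩, Finset.mem_insert_self _ _⟩
    · intro π hπ
      exact Finset.insert_erase (Finset.mem_filter.1 hπ).2
    · intro π' hπ'
      obtain ⟨hpart, -⟩ := mem_ncPartitions.1 hπ'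
      apply Finset.erase_insert
      intro hmem
      exact (Finset.mem_erase.1 (hpart.1 _ hmem (Finset.mem_singleton_self 1))).1 rfl
    · intro π hπ
      rw [Finset.insert_erase (Finset.mem_filter.1 hπ).2]
    rw [hbij]
    have hsing : blockList A' ({1} : Finset ℕ) = [u] := by
      have h01 : (0 : ℕ) ∉ ({1} : Finset ℕ) := by simp
      rw [hA', blockList_update_of_mem A u (Finset.mem_singleton_self 1) h01,
        Finset.erase_singleton]
      simp [blockList]
    have : ∀ π' ∈ ncPartitions (S.erase 1),
        ∏ V ∈ insert ({1} : Finset ℕ) π', κ (blockList A' V)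
          = κ [u] * ∏ V ∈ π', κ (blockList A V) := by
      intro π' hπ'
      obtain ⟨hpart, -⟩ := mem_ncPartitions.1 hπ'
      have h1mem : ({1} : Finset ℕ) ∉ π' := fun hmem =>
        not_one_mem_block hpart hmem (Finset.mem_singleton_self 1)
      rw [Finset.prod_insert h1mem, hsing]
      congr 1
      exact Finset.prod_congr rfl fun V hV => by
        rw [hA', blockList_update_of_not_mem A u (not_one_mem_block hpart hV)]
    rw [Finset.sum_congr rfl this, ← Finset.mul_sum]
    by_cases hS'ne : (S.erase 1).Nonempty
    · rw [← hκ A (S.erase 1) hS'ne, kappa_singleton hκ]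
    · exfalso
      rw [Finset.not_nonempty_iff_eq_empty] at hS'ne
      have : S ⊆ {1} := by
        intro a ha
        by_contra hne
        rw [Finset.mem_singleton] at hne
        exact (Finset.eq_empty_iff_forall_notMem.1 hS'ne a) (Finset.mem_erase.2 ⟨hne, ha⟩)
      have := Finset.card_le_card this
      simp at this
      omega
  rw [e2] at hmom
  -- identify the last filtered sum with the badset sum
  have e3 : ((ncPartitions S).erase {S}).filter (fun π => ({1} : Finset ℕ) ∉ π) = badset S := by
    ext π
    simp only [badset, Finset.mem_filter, Finset.mem_erase]
    tauto
  rw [e3] at hmom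
  have e4 : ∀ π ∈ badset S, ∏ V ∈ π, κ (blockList A' V)
      = κ (u :: blockList A ((blk π).erase 1)) * ∏ V ∈ π.erase (blk π), κ (blockList A V) := by
    intro π hπ
    obtain ⟨hπnc, hπne, h1π⟩ := Finset.mem_filter.1 hπ
    obtain ⟨hpart, -⟩ := mem_ncPartitions.1 hπnc
    obtain ⟨hBmem, h1B⟩ := blk_spec hpart h1S
    rw [← Finset.mul_prod_erase π _ hBmem]
    have h0B : (0 : ℕ) ∉ blk π := fun h' => h0S (hpart.1 _ hBmem h')
    congr 1
    · rw [hA', blockList_update_of_mem A u h1B h0B]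
    · exact Finset.prod_congr rfl fun V hV => by
        rw [hA', blockList_update_of_not_mem A u
          (fun h1V => (Finset.ne_of_mem_erase hV)
            (hpart.block_eq (Finset.mem_of_mem_erase hV) hBmem h1V h1B))]
  rw [Finset.sum_congr rfl e4] at hmom
  rw [hBP] at hmom
  linear_combination -hmom

/-! ### classical cumulant decomposition -/

lemma cumulant_decomp [Monoid 𝔘] (ω : 𝔘 → ℂ) (hω1 : ω 1 = 1) (A : ℕ → 𝔘) (u : 𝔘)
    (S : Finset ℕ) (h1S : 1 ∈ S) (h0S : 0 ∉ S) (h2 : 2 ≤ S.card) :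
    cumulant ω (Function.update A 1 u) S =
      ∑ π ∈ setPartitions S,
        ((-1 : ℂ) ^ (π.card - 1) * ((π.card - 1).factorial : ℂ) *
          ∏ V ∈ π.erase (blk π), ω (blockProd A V)) *
        (ω (u * blockProd A ((blk π).erase 1)) -
          ω u * ω (blockProd A ((blk π).erase 1))) := by
  classical
  have key1 : ∀ π ∈ setPartitions S, ∏ V ∈ π, ω (blockProd (Function.update A 1 u) V)
      = ω (u * blockProd A ((blk π).erase 1)) * ∏ V ∈ π.erase (blk π), ω (blockProd A V) := by
    intro π hπ
    have hpart := mem_setPartitions.1 hπ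
    obtain ⟨hBmem, h1B⟩ := blk_spec hpart h1S
    have h0B : (0 : ℕ) ∉ blk π := fun h' => h0S (hpart.1 _ hBmem h')
    rw [← Finset.mul_prod_erase π _ hBmem, blockProd_update_of_mem A u h1B h0B]
    congr 1
    exact Finset.prod_congr rfl fun V hV => by
      rw [blockProd_update_of_not_mem A u
        (fun h1V => (Finset.ne_of_mem_erase hV)
          (hpart.block_eq (Finset.mem_of_mem_erase hV) hBmem h1V h1B))]
  have key2 : ∀ π ∈ setPartitions S, ∏ V ∈ π, ω (blockProd A (V.erase 1))
      = ω (blockProd A ((blk π).erase 1)) * ∏ V ∈ π.erase (blk π), ω (blockProd A V) := by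
    intro π hπ
    have hpart := mem_setPartitions.1 hπ
    obtain ⟨hBmem, h1B⟩ := blk_spec hpart h1S
    rw [← Finset.mul_prod_erase π _ hBmem]
    congr 1
    exact Finset.prod_congr rfl fun V hV => by
      rw [Finset.erase_eq_of_notMem
        (fun h1V => (Finset.ne_of_mem_erase hV)
          (hpart.block_eq (Finset.mem_of_mem_erase hV) hBmem h1V h1B))]
  have K0 : ∑ π ∈ setPartitions S,
      (-1 : ℂ) ^ (π.card - 1) * ((π.card - 1).factorial : ℂ) *
        (ω (blockProd A ((blk π).erase 1)) * ∏ V ∈ π.erase (blk π), ω (blockProd A V)) = 0 := by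
    rw [← Kzero S h1S h2 (fun W => ω (blockProd A W)) (by show ω (blockProd A ∅) = 1; rw [blockProd_empty]; exact hω1)]
    exact Finset.sum_congr rfl fun π hπ => by rw [key2 π hπ]
  rw [cumulant]
  rw [Finset.sum_congr rfl (fun π hπ => by rw [key1 π hπ])]
  have expand : ∀ π ∈ setPartitions S,
      ((-1 : ℂ) ^ (π.card - 1) * ((π.card - 1).factorial : ℂ) *
          ∏ V ∈ π.erase (blk π), ω (blockProd A V)) *
        (ω (u * blockProd A ((blk π).erase 1)) - ω u * ω (blockProd A ((blk π).erase 1)))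
      = (-1 : ℂ) ^ (π.card - 1) * ((π.card - 1).factorial : ℂ) *
          (ω (u * blockProd A ((blk π).erase 1)) * ∏ V ∈ π.erase (blk π), ω (blockProd A V))
        - ω u * ((-1 : ℂ) ^ (π.card - 1) * ((π.card - 1).factorial : ℂ) *
          (ω (blockProd A ((blk π).erase 1)) * ∏ V ∈ π.erase (blk π), ω (blockProd A V))) := by
    intro π hπ
    ring
  rw [Finset.sum_congr rfl expand, Finset.sum_sub_distrib, ← Finset.mul_sum, K0, mul_zero,
    sub_zero]

/-! ### list realization -/

lemma map_getD_range' {X : Type*} (d : X) : ∀ (M : List X) (s : ℕ),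
    (List.range' s M.length).map (fun j => M.getD (j - s) d) = M := by
  intro M
  induction M with
  | nil => intro s; simp
  | cons a t ih =>
    intro s
    rw [List.length_cons, List.range'_succ, List.map_cons]
    congr 1
    · simp
    · rw [List.map_congr_left (g := fun j => t.getD (j - (s + 1)) d) (fun j hj => ?_), ih (s+1)]
      have hj' : s + 1 ≤ j := (List.mem_range'_1.1 hj).1
      have : j - s = (j - (s + 1)) + 1 := by omega
      rw [this, List.getD_cons_succ]

lemma blockList_mk (d : 𝔘) (M : List 𝔘) :
    blockList (fun j => M.getD (j - 1) d) (Finset.Icc 1 M.length) = M := by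
  rw [blockList, sort_Icc, Nat.add_sub_cancel]
  exact map_getD_range' d M 1

/-! ### analytic lemmas -/

open MeasureTheory in
lemma intOn {G : Type*} [MeasurableSpace G] {μ : Measure G} {s : Set G} (hs : μ s < ⊤)
    {f : G → ℂ} (hm : Measurable f) {C : ℝ} (hb : ∀ x, ‖f x‖ ≤ C) :
    IntegrableOn f s μ := by
  refine Integrable.mono' (g := fun _ => C) (integrableOn_const hs.ne enorm_ne_top)
    hm.aestronglyMeasurable (Filter.Eventually.of_forall fun x => hb x)

lemma bounded_sum {G β : Type*} {t : Finset β} {f : β → G → ℂ}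
    (h : ∀ b ∈ t, ∃ C, ∀ x, ‖f b x‖ ≤ C) : ∃ C, ∀ x, ‖∑ b ∈ t, f b x‖ ≤ C := by
  classical
  choose! C hC using h
  exact ⟨∑ b ∈ t, C b, fun x => (norm_sum_le _ _).trans
    (Finset.sum_le_sum fun b hb => hC b hb x)⟩

open MeasureTheory in
lemma avg_tendsto_sum {G ι β : Type*} [MeasurableSpace G] {μ : Measure G} {l : Filter ι}
    {U : ι → Set G} (hUfin : ∀ i, μ (U i) < ⊤) (t : Finset β) (f : β → G → ℂ)
    (hm : ∀ b ∈ t, Measurable (f b)) (hb : ∀ b ∈ t, ∃ C, ∀ x, ‖f b x‖ ≤ C)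
    (ht : ∀ b ∈ t, Filter.Tendsto
      (fun i => (μ (U i)).toReal⁻¹ • ∫ x in U i, f b x ∂μ) l (𝓝 0)) :
    Filter.Tendsto
      (fun i => (μ (U i)).toReal⁻¹ • ∫ x in U i, (∑ b ∈ t, f b x) ∂μ) l (𝓝 0) := by
  have key : ∀ i, ∫ x in U i, (∑ b ∈ t, f b x) ∂μ = ∑ b ∈ t, ∫ x in U i, f b x ∂μ := by
    intro i
    apply integral_finset_sum
    intro b hb'
    obtain ⟨C, hC⟩ := hb b hb'
    exact intOn (hUfin i) (hm b hb') hC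
  simp only [key, Finset.smul_sum]
  have := tendsto_finset_sum t (fun b hb' => ht b hb')
  simpa using this

open MeasureTheory in
lemma avg_tendsto_const_mul {G ι : Type*} [MeasurableSpace G] {μ : Measure G} {l : Filter ι}
    {U : ι → Set G} (c : ℂ) {f : G → ℂ}
    (hf : Filter.Tendsto (fun i => (μ (U i)).toReal⁻¹ • ∫ x in U i, f x ∂μ) l (𝓝 0)) :
    Filter.Tendsto (fun i => (μ (U i)).toReal⁻¹ • ∫ x in U i, c * f x ∂μ) l (𝓝 0) := by
  have key : ∀ i, (μ (U i)).toReal⁻¹ • ∫ x in U i, c * f x ∂μ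
      = c * ((μ (U i)).toReal⁻¹ • ∫ x in U i, f x ∂μ) := by
    intro i
    have h1 : ∫ x in U i, c * f x ∂μ = c * ∫ x in U i, f x ∂μ := by
      simpa [smul_eq_mul] using integral_smul (μ := μ.restrict (U i)) c f
    rw [h1, ← smul_eq_mul, ← smul_eq_mul, smul_comm]
  simp only [key]
  simpa using hf.const_mul c

open MeasureTheory in
lemma avg_tendsto_sub {G ι : Type*} [MeasurableSpace G] {μ : Measure G} {l : Filter ι}
    {U : ι → Set G} (hUfin : ∀ i, μ (U i) < ⊤) {f g : G → ℂ}
    (hfm : Measurable f) (hfb : ∃ C, ∀ x, ‖f x‖ ≤ C)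
    (hgm : Measurable g) (hgb : ∃ C, ∀ x, ‖g x‖ ≤ C)
    (hf : Filter.Tendsto (fun i => (μ (U i)).toReal⁻¹ • ∫ x in U i, f x ∂μ) l (𝓝 0))
    (hg : Filter.Tendsto (fun i => (μ (U i)).toReal⁻¹ • ∫ x in U i, g x ∂μ) l (𝓝 0)) :
    Filter.Tendsto
      (fun i => (μ (U i)).toReal⁻¹ • ∫ x in U i, (f x - g x) ∂μ) l (𝓝 0) := by
  obtain ⟨Cf, hCf⟩ := hfb
  obtain ⟨Cg, hCg⟩ := hgb
  have key : ∀ i, ∫ x in U i, (f x - g x) ∂μ = (∫ x in U i, f x ∂μ) - ∫ x in U i, g x ∂μ :=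
    fun i => integral_sub (intOn (hUfin i) hfm hCf) (intOn (hUfin i) hgm hCg)
  simp only [key, smul_sub]
  simpa using hf.sub hg

/-! ### states -/

section State
variable [NormedRing 𝔘] [StarRing 𝔘] [CStarRing 𝔘] [NormedAlgebra ℂ 𝔘] [StarModule ℂ 𝔘]
  [CompleteSpace 𝔘]

lemma state_herm (ω : 𝔘 →ₗ[ℂ] ℂ) (hω : IsState ω) (b : 𝔘) :
    ω (star b) = starRingEnd ℂ (ω b) := by
  have key : ∀ t : ℂ, (ω (star (t • 1 + b) * (t • 1 + b))).im = 0 := fun t => (hω.positive _).2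
  have expand : ∀ t : ℂ, ω (star (t • 1 + b) * (t • 1 + b)) =
      starRingEnd ℂ t * t + starRingEnd ℂ t * ω b + t * ω (star b) + ω (star b * b) := by
    intro t
    have : star (t • 1 + b) * (t • 1 + b) =
        (starRingEnd ℂ t * t) • 1 + (starRingEnd ℂ t) • b + t • star b + star b * b := by
      simp [star_smul, add_mul, mul_add, smul_mul_assoc, mul_smul_comm, smul_smul, star_one]
      ring_nf
      abel
    rw [this]
    simp [hω.unital]
  have h1 := key 1
  have h2 := key Complex.I
  rw [expand] at h1 h2
  have hbb := (hω.positive b).2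
  simp [Complex.add_im, Complex.mul_im, hbb] at h1 h2
  apply Complex.ext <;> simp <;> [linarith; linarith]

lemma state_norm_le (ω : 𝔘 →ₗ[ℂ] ℂ) (hω : IsState ω) (b : 𝔘) : ‖ω b‖ ≤ ‖b‖ := by
  set β := ω b with hβ
  have expand : ω (star ((-β) • 1 + b) * ((-β) • 1 + b)) =
      ω (star b * b) - (Complex.normSq β : ℂ) := by
    have : star ((-β) • 1 + b) * ((-β) • 1 + b) =
        (starRingEnd ℂ β * β) • 1 + (-(starRingEnd ℂ β)) • b + (-β) • star b + star b * b := by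
      simp [star_smul, add_mul, mul_add, smul_mul_assoc, mul_smul_comm, smul_smul, star_one]
      ring_nf
      abel
    rw [this]
    simp [hω.unital, state_herm ω hω b, Complex.mul_conj]
    rw [← hβ, Complex.normSq_eq_conj_mul_self]
    ring
  have hpos := (hω.positive ((-β) • 1 + b)).1
  rw [expand] at hpos
  have h1 : Complex.normSq β ≤ (ω (star b * b)).re := by simpa using hpos
  letI : CStarAlgebra 𝔘 := ⟨⟩
  letI := CStarAlgebra.spectralOrder 𝔘
  letI := CStarAlgebra.spectralOrderedRing 𝔘
  have hcl : ∀ p ∈ AddSubmonoid.closure (Set.range fun s : 𝔘 => star s * s),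
      0 ≤ (ω p).re ∧ (ω p).im = 0 := by
    intro p hp
    refine AddSubmonoid.closure_induction ?_ ?_ ?_ hp
    · rintro x ⟨s, rfl⟩; exact hω.positive s
    · simp
    · intro x y _ _ hx hy
      rw [map_add]
      exact ⟨by simp; linarith [hx.1, hy.1], by simp [hx.2, hy.2]⟩
  have hle : star b * b ≤ algebraMap ℝ 𝔘 (‖b‖ ^ 2) :=
    CStarAlgebra.star_mul_le_algebraMap_norm_sq
  rw [StarOrderedRing.le_iff] at hle
  obtain ⟨p, hp, heq⟩ := hle
  have h2 : (ω (star b * b)).re ≤ ‖b‖ ^ 2 := by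
    have hmap : ω (algebraMap ℝ 𝔘 (‖b‖ ^ 2)) = ((‖b‖ ^ 2 : ℝ) : ℂ) := by
      have : algebraMap ℝ 𝔘 (‖b‖ ^ 2) = ((‖b‖ ^ 2 : ℝ) : ℂ) • (1 : 𝔘) := by
        simp [Algebra.algebraMap_eq_smul_one]; norm_cast
      rw [this, map_smul, hω.unital]; simp
    have := congrArg Complex.re (congrArg ω heq)
    rw [hmap, map_add, Complex.add_re, Complex.ofReal_re] at this
    have := (hcl p hp).1
    linarith
  have hsq : ‖β‖ ^ 2 ≤ ‖b‖ ^ 2 := by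
    calc ‖β‖ ^ 2 = Complex.normSq β := by
          rw [Complex.normSq_eq_norm_sq]
      _ ≤ (ω (star b * b)).re := h1
      _ ≤ ‖b‖ ^ 2 := h2
  nlinarith [norm_nonneg (ω b), norm_nonneg b]


end State

/-! ### the main induction for free cumulants -/

open MeasureTheory in
lemma free_main {G ι : Type*} [MeasurableSpace G]
    [NormedRing 𝔘] [StarRing 𝔘] [CStarRing 𝔘] [NormedAlgebra ℂ 𝔘] [StarModule ℂ 𝔘]
    [CompleteSpace 𝔘] (μ : Measure G) (α : G → 𝔘 ≃⋆ₐ[ℂ] 𝔘) (ω : 𝔘 →ₗ[ℂ] ℂ) (hω : IsState ω)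
    (l : Filter ι) (U : ι → Set G) (hUfin : ∀ i, μ (U i) < ⊤)
    (hmeas : ∀ A B : 𝔘, Measurable fun x : G => ω (α x A * B))
    (hcl : ∀ A B : 𝔘, Filter.Tendsto
      (fun i => (μ (U i)).toReal⁻¹ •
        ∫ x in U i, (ω (α x A * B) - ω (α x A) * ω B) ∂μ) l (𝓝 0))
    (κ : List 𝔘 → ℂ) (hκ : IsFreeCumulantFamily ⇑ω κ) :
    ∀ k (A₀ : 𝔘) (L : List 𝔘), L.length = k →
      Measurable (fun x => κ (α x A₀ :: L)) ∧ (∃ C, ∀ x, ‖κ (α x A₀ :: L)‖ ≤ C) ∧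
      (L ≠ [] → Filter.Tendsto
        (fun i => (μ (U i)).toReal⁻¹ • ∫ x in U i, κ (α x A₀ :: L) ∂μ) l (𝓝 0)) := by
  intro k
  induction k using Nat.strong_induction_on with
  | _ k ih =>
  intro A₀ L hL
  letI : CStarAlgebra 𝔘 := ⟨⟩
  have hαn : ∀ (x : G) (a : 𝔘), ‖α x a‖ = ‖a‖ := fun x a => StarAlgEquiv.norm_map (α x) a
  have hωn : ∀ z : 𝔘, ‖ω z‖ ≤ ‖z‖ := state_norm_le ω hω
  have hmeas0 : Measurable fun x : G => ω (α x A₀) := by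
    have := hmeas A₀ 1
    simpa using this
  have hbnd : ∀ (a b : 𝔘) (x : G), ‖ω (α x a * b)‖ ≤ ‖a‖ * ‖b‖ := by
    intro a b x
    calc ‖ω (α x a * b)‖ ≤ ‖α x a * b‖ := hωn _
      _ ≤ ‖α x a‖ * ‖b‖ := norm_mul_le _ _
      _ = ‖a‖ * ‖b‖ := by rw [hαn]
  rcases L with - | ⟨B₀, L'⟩
  · -- base case : singleton list
    have heq : (fun x : G => κ (α x A₀ :: [])) = fun x => ω (α x A₀ * 1) := by
      funext x
      rw [kappa_singleton hκ, mul_one]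
    refine ⟨heq ▸ hmeas A₀ 1, ⟨‖A₀‖ * ‖(1 : 𝔘)‖, fun x => ?_⟩, fun h => absurd rfl h⟩
    · rw [show κ (α x A₀ :: []) = ω (α x A₀ * 1) from congrFun heq x]
      exact hbnd A₀ 1 x
  · -- inductive case
    set L : List 𝔘 := B₀ :: L' with hLdef
    have hLne : L ≠ [] := by simp [hLdef]
    have hk1 : 1 ≤ k := by rw [← hL]; simp [hLdef]
    set S : Finset ℕ := Finset.Icc 1 (k + 1) with hSdef
    set A : ℕ → 𝔘 := fun j => (A₀ :: L).getD (j - 1) 1 with hAdef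
    have hcardS : S.card = k + 1 := by rw [hSdef, Nat.card_Icc]; omega
    have h1S : 1 ∈ S := by rw [hSdef, Finset.mem_Icc]; omega
    have h0S : (0 : ℕ) ∉ S := by rw [hSdef, Finset.mem_Icc]; omega
    have h2S : 2 ≤ S.card := by rw [hcardS]; omega
    have hA1 : A 1 = A₀ := by rw [hAdef]; rfl
    have hblS : blockList A S = A₀ :: L := by
      have hlen : (A₀ :: L).length = k + 1 := by rw [← hL]; simp [hLdef]
      have := blockList_mk (1 : 𝔘) (A₀ :: L)
      rw [hlen] at this
      exact this
    have hbl' : blockList A (S.erase 1) = L := by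
      have h1 := blockList_update_of_mem A (A 1) h1S h0S
      rw [Function.update_eq_self, hblS, hA1] at h1
      exact (List.cons.injEq _ _ _ _ ▸ h1).2.symm
    have hBPe : blockProd A (S.erase 1) = L.prod := by rw [blockProd, hbl']
    -- decomposition
    have hdec : ∀ u : 𝔘, κ (u :: L) =
        (ω (u * L.prod) - ω u * ω L.prod)
        - ∑ π ∈ badset S,
            κ (u :: blockList A ((blk π).erase 1)) *
              ∏ V ∈ π.erase (blk π), κ (blockList A V) := by
      intro u
      have := free_decomp hκ A u S h1S h0S h2S
      rw [hbl', hBPe] at this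
      exact this
    -- facts about the bad partitions
    have hbad : ∀ π ∈ badset S,
        (blockList A ((blk π).erase 1)).length < k ∧
          blockList A ((blk π).erase 1) ≠ [] := by
      intro π hπ
      obtain ⟨hπnc, hπne, h1π⟩ := Finset.mem_filter.1 hπ
      obtain ⟨hpart, -⟩ := mem_ncPartitions.1 hπnc
      have hlen : (blockList A ((blk π).erase 1)).length = ((blk π).erase 1).card := by
        rw [blockList, List.length_map, Finset.length_sort]
      have hcardlt := blk_card_lt hpart h1S hπne
      have hne := blk_erase_nonempty hpart h1S h1π
      obtain ⟨hBmem, h1B⟩ := blk_spec hpart h1S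
      have hcarderase : ((blk π).erase 1).card = (blk π).card - 1 :=
        Finset.card_erase_of_mem h1B
      rw [hcardS] at hcardlt
      constructor
      · rw [hlen, hcarderase]
        omega
      · intro h'
        have hz : (blockList A ((blk π).erase 1)).length = 0 := by rw [h']; rfl
        rw [hlen] at hz
        have := Finset.card_pos.2 hne
        omega
    -- the three pieces
    have hmL : Measurable fun x : G => ω (α x A₀ * L.prod) := hmeas A₀ L.prod
    have hterm1m : Measurable fun x : G =>
        ω (α x A₀ * L.prod) - ω (α x A₀) * ω L.prod :=
      hmL.sub (hmeas0.mul_const _)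
    have hterm1b : ∃ C, ∀ x : G,
        ‖ω (α x A₀ * L.prod) - ω (α x A₀) * ω L.prod‖ ≤ C := by
      refine ⟨‖A₀‖ * ‖L.prod‖ + ‖A₀‖ * ‖(1 : 𝔘)‖ * ‖ω L.prod‖, fun x => ?_⟩
      refine (norm_sub_le _ _).trans (add_le_add (hbnd A₀ L.prod x) ?_)
      rw [norm_mul]
      have h1 : ‖ω (α x A₀)‖ ≤ ‖A₀‖ * ‖(1 : 𝔘)‖ := by
        have := hbnd A₀ 1 x
        rwa [mul_one] at this
      exact mul_le_mul_of_nonneg_right h1 (norm_nonneg _)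
    have hIH : ∀ π ∈ badset S,
        Measurable (fun x : G => κ (α x A₀ :: blockList A ((blk π).erase 1))) ∧
        (∃ C, ∀ x : G, ‖κ (α x A₀ :: blockList A ((blk π).erase 1))‖ ≤ C) ∧
        Filter.Tendsto (fun i => (μ (U i)).toReal⁻¹ •
          ∫ x in U i, κ (α x A₀ :: blockList A ((blk π).erase 1)) ∂μ) l (𝓝 0) := by
      intro π hπ
      obtain ⟨hlt, hne⟩ := hbad π hπ
      obtain ⟨m1, m2, m3⟩ := ih _ hlt A₀ _ rfl
      exact ⟨m1, m2, m3 hne⟩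
    set badF : Finset (Finset ℕ) → G → ℂ := fun π x =>
      κ (α x A₀ :: blockList A ((blk π).erase 1)) *
        ∏ V ∈ π.erase (blk π), κ (blockList A V) with hbadF
    have hbadm : ∀ π ∈ badset S, Measurable (badF π) := fun π hπ =>
      ((hIH π hπ).1).mul_const _
    have hbadb : ∀ π ∈ badset S, ∃ C, ∀ x, ‖badF π x‖ ≤ C := by
      intro π hπ
      obtain ⟨C, hC⟩ := (hIH π hπ).2.1
      refine ⟨C * ‖∏ V ∈ π.erase (blk π), κ (blockList A V)‖, fun x => ?_⟩
      rw [hbadF, norm_mul]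
      exact mul_le_mul_of_nonneg_right (hC x) (norm_nonneg _)
    have hbadt : ∀ π ∈ badset S, Filter.Tendsto
        (fun i => (μ (U i)).toReal⁻¹ • ∫ x in U i, badF π x ∂μ) l (𝓝 0) := by
      intro π hπ
      have h1 : badF π = fun x => (∏ V ∈ π.erase (blk π), κ (blockList A V)) *
          κ (α x A₀ :: blockList A ((blk π).erase 1)) := by
        funext x
        rw [hbadF, mul_comm]
      rw [h1]
      exact avg_tendsto_const_mul _ (hIH π hπ).2.2
    have hfeq : (fun x : G => κ (α x A₀ :: L)) = fun x =>
        (ω (α x A₀ * L.prod) - ω (α x A₀) * ω L.prod) - ∑ π ∈ badset S, badF π x := by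
      funext x
      exact hdec (α x A₀)
    have hsumm : Measurable fun x : G => ∑ π ∈ badset S, badF π x :=
      Finset.measurable_sum _ hbadm
    have hsumb : ∃ C, ∀ x : G, ‖∑ π ∈ badset S, badF π x‖ ≤ C := bounded_sum hbadb
    refine ⟨?_, ?_, fun _ => ?_⟩
    · rw [hfeq]
      exact hterm1m.sub hsumm
    · obtain ⟨C1, hC1⟩ := hterm1b
      obtain ⟨C2, hC2⟩ := hsumb
      refine ⟨C1 + C2, fun x => ?_⟩
      rw [show κ (α x A₀ :: L) = (ω (α x A₀ * L.prod) - ω (α x A₀) * ω L.prod)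
        - ∑ π ∈ badset S, badF π x from congrFun hfeq x]
      exact (norm_sub_le _ _).trans (add_le_add (hC1 x) (hC2 x))
    · rw [hfeq]
      exact avg_tendsto_sub hUfin hterm1m hterm1b hsumm hsumb (hcl A₀ L.prod)
        (avg_tendsto_sum hUfin _ _ hbadm hbadb hbadt)


open MeasureTheory in
/-- mean clustering (ergodicity) for the covariance extends to all higher
classical and free cumulants: their averages over the sets U_i vanish along the net. -/
theorem cumulant_mean_clustering {G ι : Type*} [CommGroup G] [TopologicalSpace G]
    [IsTopologicalGroup G] [LocallyCompactSpace G] [MeasurableSpace G] [BorelSpace G]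
    [NormedRing 𝔘] [StarRing 𝔘] [CStarRing 𝔘] [NormedAlgebra ℂ 𝔘] [StarModule ℂ 𝔘]
    [CompleteSpace 𝔘]
    (μ : Measure G) [μ.IsHaarMeasure]
    (α : G → 𝔘 ≃⋆ₐ[ℂ] 𝔘) (hα : IsStarAutoRep α)
    (ω : 𝔘 →ₗ[ℂ] ℂ) (hω : IsState ω)
    (l : Filter ι) (U : ι → Set G)
    (hUmeas : ∀ i, MeasurableSet (U i))
    (hUpos : ∀ i, 0 < μ (U i)) (hUfin : ∀ i, μ (U i) < ⊤)
    (hmeas : ∀ A B : 𝔘, Measurable fun x : G => ω (α x A * B))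
    (hcl : ∀ A B : 𝔘, Filter.Tendsto
      (fun i => (μ (U i)).toReal⁻¹ •
        ∫ x in U i, (ω (α x A * B) - ω (α x A) * ω B) ∂μ) l (𝓝 0)) :
    ∀ n, 2 ≤ n → ∀ A : ℕ → 𝔘,
      Filter.Tendsto
        (fun i => (μ (U i)).toReal⁻¹ •
          ∫ x in U i,
            cumulant ⇑ω (Function.update A 1 (α x (A 1))) (Finset.Icc 1 n) ∂μ)
        l (𝓝 0) ∧
      ∀ κ : List 𝔘 → ℂ, IsFreeCumulantFamily ⇑ω κ →
        Filter.Tendsto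
          (fun i => (μ (U i)).toReal⁻¹ •
            ∫ x in U i,
              κ (blockList (Function.update A 1 (α x (A 1))) (Finset.Icc 1 n)) ∂μ)
          l (𝓝 0) := by
  intro n hn A
  letI : CStarAlgebra 𝔘 := ⟨⟩
  have hαn : ∀ (x : G) (a : 𝔘), ‖α x a‖ = ‖a‖ := fun x a => StarAlgEquiv.norm_map (α x) a
  have hωn : ∀ z : 𝔘, ‖ω z‖ ≤ ‖z‖ := state_norm_le ω hω
  have hbnd : ∀ (a b : 𝔘) (x : G), ‖ω (α x a * b)‖ ≤ ‖a‖ * ‖b‖ := by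
    intro a b x
    calc ‖ω (α x a * b)‖ ≤ ‖α x a * b‖ := hωn _
      _ ≤ ‖α x a‖ * ‖b‖ := norm_mul_le _ _
      _ = ‖a‖ * ‖b‖ := by rw [hαn]
  have hmeas0 : Measurable fun x : G => ω (α x (A 1)) := by
    have := hmeas (A 1) 1
    simpa using this
  have hbnd0 : ∀ x : G, ‖ω (α x (A 1))‖ ≤ ‖A 1‖ * ‖(1 : 𝔘)‖ := by
    intro x
    have := hbnd (A 1) 1 x
    rwa [mul_one] at this
  set S : Finset ℕ := Finset.Icc 1 n with hSdef
  have hcardS : S.card = n := by rw [hSdef, Nat.card_Icc]; omega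
  have h1S : 1 ∈ S := by rw [hSdef, Finset.mem_Icc]; omega
  have h0S : (0 : ℕ) ∉ S := by rw [hSdef, Finset.mem_Icc]; omega
  have h2S : 2 ≤ S.card := by omega
  constructor
  · -- classical cumulants
    have hid : ∀ x : G, cumulant ⇑ω (Function.update A 1 (α x (A 1))) S =
        ∑ π ∈ setPartitions S,
          ((-1 : ℂ) ^ (π.card - 1) * ((π.card - 1).factorial : ℂ) *
            ∏ V ∈ π.erase (blk π), ω (blockProd A V)) *
          (ω (α x (A 1) * blockProd A ((blk π).erase 1)) -
            ω (α x (A 1)) * ω (blockProd A ((blk π).erase 1))) := fun x =>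
      cumulant_decomp ⇑ω hω.unital A (α x (A 1)) S h1S h0S h2S
    simp only [hid]
    apply avg_tendsto_sum hUfin
    · intro π hπ
      exact ((hmeas (A 1) _).sub (hmeas0.mul_const _)).const_mul _
    · intro π hπ
      refine ⟨‖(-1 : ℂ) ^ (π.card - 1) * ((π.card - 1).factorial : ℂ) *
          ∏ V ∈ π.erase (blk π), ω (blockProd A V)‖ *
        (‖A 1‖ * ‖blockProd A ((blk π).erase 1)‖ +
          ‖A 1‖ * ‖(1 : 𝔘)‖ * ‖ω (blockProd A ((blk π).erase 1))‖), fun x => ?_⟩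
      rw [norm_mul]
      refine mul_le_mul_of_nonneg_left ?_ (norm_nonneg _)
      refine (norm_sub_le _ _).trans (add_le_add (hbnd (A 1) _ x) ?_)
      rw [norm_mul]
      exact mul_le_mul_of_nonneg_right (hbnd0 x) (norm_nonneg _)
    · intro π hπ
      exact avg_tendsto_const_mul _ (hcl (A 1) (blockProd A ((blk π).erase 1)))
  · -- free cumulants
    intro κ hκ
    have hbl : ∀ u : 𝔘, blockList (Function.update A 1 u) S
        = u :: blockList A (S.erase 1) := fun u => blockList_update_of_mem A u h1S h0S
    simp only [hbl]
    have hLne : blockList A (S.erase 1) ≠ [] := by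
      intro h'
      have hz : (blockList A (S.erase 1)).length = 0 := by rw [h']; rfl
      rw [blockList, List.length_map, Finset.length_sort, Finset.card_erase_of_mem h1S,
        hcardS] at hz
      omega
    exact (free_main μ α ω hω l U hUfin hmeas hcl κ hκ
      (blockList A (S.erase 1)).length (A 1) (blockList A (S.erase 1)) rfl).2.2 hLne
end
end

section
/- Let (𝔘, G, α) be a C*-dynamical system that is asymptotically abelian along a net g^i (lim_i ‖[α_{g^i}A, B]‖ = 0 for all A, B ∈ 𝔘). If ω is a state satisfying the two-element clustering property lim_i (ω(α_{g^i}(A)B) − ω(α_{g^i}A)ω(B)) = 0 for all A, B, then ω also satisfies the three-element clustering property: lim_i (ω(A α_{g^i}(B) C) − ω(AC)ω(α_{g^i}B)) = 0 for all A, B, C ∈ 𝔘. -/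
open scoped Classical
open Filter Topology

noncomputable section

variable {𝔘 : Type*}

/-- in an asymptotically abelian C*-dynamical system, two-element clustering
implies the three-element clustering property. -/
theorem two_element_implies_three_element_clustering {G ι : Type*} [Group G]
    [TopologicalSpace G] [IsTopologicalGroup G] [LocallyCompactSpace G]
    [NormedRing 𝔘] [StarRing 𝔘] [CStarRing 𝔘] [NormedAlgebra ℂ 𝔘] [StarModule ℂ 𝔘]
    [CompleteSpace 𝔘]
    (α : G → 𝔘 ≃⋆ₐ[ℂ] 𝔘) (hα : IsStarAutoRep α)
    (ω : 𝔘 →ₗ[ℂ] ℂ) (hω : IsState ω) (hωb : ∀ X : 𝔘, ‖ω X‖ ≤ ‖X‖)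
    (l : Filter ι) (g : ι → G)
    (hab : ∀ A B : 𝔘, Filter.Tendsto
      (fun i => ‖α (g i) A * B - B * α (g i) A‖) l (𝓝 0))
    (hcl : ∀ A B : 𝔘, Filter.Tendsto
      (fun i => ω (α (g i) A * B) - ω (α (g i) A) * ω B) l (𝓝 0)) :
    ∀ A B C : 𝔘, Filter.Tendsto
      (fun i => ω (A * α (g i) B * C) - ω (A * C) * ω (α (g i) B)) l (𝓝 0) := by
  intro A B C
  have h1 : Filter.Tendsto (fun i => ω (A * (α (g i) B * C - C * α (g i) B))) l (𝓝 0) := by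
    apply squeeze_zero_norm (a := fun i => ‖A‖ * ‖α (g i) B * C - C * α (g i) B‖)
    · intro i
      exact (hωb _).trans (norm_mul_le _ _)
    · simpa using (hab B C).const_mul ‖A‖
  have h2 : Filter.Tendsto (fun i => ω (A * C * α (g i) B - α (g i) B * (A * C))) l (𝓝 0) := by
    apply squeeze_zero_norm (a := fun i => ‖α (g i) B * (A * C) - (A * C) * α (g i) B‖)
    · intro i
      refine (hωb _).trans ?_
      rw [norm_sub_rev]
    · exact hab B (A * C)
  have h3 : Filter.Tendsto (fun i => ω (α (g i) B * (A * C)) - ω (α (g i) B) * ω (A * C)) l (𝓝 0) :=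
    hcl B (A * C)
  have := (h1.add h2).add h3
  simp only [add_zero] at this
  refine this.congr fun i => ?_
  simp only [mul_sub, map_sub, mul_assoc]
  ring
end
end
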